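/- Let M be a compact metric space, f : M → M continuous, φ : M → ℝ continuous, and suppose φ_-(x) = liminf_n (1/n)∑_{j=0}^{n-1} φ(f^j(x)) defines a continuous function on M. If x ∈ M is such that ω(x, f) is a finite set, then lim_{n→∞} (1/n) ∑_{j=0}^{n-1} φ(f^j(x)) exists. -/

import Mathlib

open Filter

/-- Birkhoff sums. -/
noncomputable def birkSum {M : Type*} (f : M → M) (φ : M → ℝ) (n : ℕ) (x : M) : ℝ :=
  ∑ j ∈ Finset.range n, φ (f^[j] x)

/-- Lower Birkhoff average. -/
noncomputable def birkLower {M : Type*} (f : M → M) (φ : M → ℝ) (x : M) : ℝ :=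
  liminf (fun n : ℕ => birkSum f φ n x / n) atTop

/-- ω-limit set of a point under a map. -/
def omegaMap {M : Type*} [TopologicalSpace M] (f : M → M) (x : M) : Set M :=
  {y | ∃ s : ℕ → ℕ, StrictMono s ∧ Tendsto (fun k => f^[s k] x) atTop (nhds y)}

/-- Cesàro averages of an eventually periodic real sequence converge. -/
lemma cesaro_of_eventually_periodic (g : ℕ → ℝ) (a p : ℕ) (hp : 0 < p)
    (hper : ∀ k, a ≤ k → g (k + p) = g k) :
    ∃ L : ℝ, Tendsto (fun n : ℕ => (∑ j ∈ Finset.range n, g j) / n) atTop (nhds L) := by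
  set P : ℝ := ∑ j ∈ Finset.range p, g (a + j) with hP
  set L : ℝ := P / p with hL
  refine ⟨L, ?_⟩
  have hW : ∀ n, a ≤ n → (∑ j ∈ Finset.range p, g (n + j)) = P := by
    intro n hn
    induction n, hn using Nat.le_induction with
    | base => rfl
    | succ n hn ih =>
      have h1 : (∑ j ∈ Finset.range (p+1), g (n + j))
          = (∑ j ∈ Finset.range p, g (n + 1 + j)) + g n := by
        rw [Finset.sum_range_succ']
        have e : ∀ j, g (n + (j+1)) = g (n+1+j) := fun j => congrArg g (by omega)
        simp only [e, Nat.add_zero]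
      have h2 : (∑ j ∈ Finset.range (p+1), g (n + j))
          = (∑ j ∈ Finset.range p, g (n + j)) + g (n + p) := Finset.sum_range_succ _ _
      have h3 : (∑ j ∈ Finset.range p, g (n + 1 + j)) = ∑ j ∈ Finset.range p, g (n + j) := by
        have := h1.symm.trans h2
        linarith [hper n hn]
      rw [h3, ih]
  set F : ℕ → ℝ := fun n => (∑ j ∈ Finset.range n, g j) - n * L with hF
  have hpL : (p : ℝ) * L = P := by
    rw [hL]
    field_simp
  have hFper : ∀ n, a ≤ n → F (n + p) = F n := by
    intro n hn
    have hsum : (∑ j ∈ Finset.range (n + p), g j)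
        = (∑ j ∈ Finset.range n, g j) + ∑ j ∈ Finset.range p, g (n + j) :=
      Finset.sum_range_add g n p
    simp only [hF, hsum, hW n hn]
    push_cast
    linarith [hpL]
  have hFmod : ∀ k, F (a + k) = F (a + k % p) := by
    intro k
    induction k using Nat.strong_induction_on with
    | _ k ih =>
      rcases lt_or_ge k p with h | h
      · rw [Nat.mod_eq_of_lt h]
      · have hk : k - p < k := by omega
        have e1 : a + k = (a + (k - p)) + p := by omega
        rw [e1, hFper _ (by omega), ih _ hk, Nat.mod_eq_sub_mod h]
  obtain ⟨B, hB⟩ : ∃ B : ℝ, ∀ n, a ≤ n → |F n| ≤ B := by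
    refine ⟨(Finset.range p).sup' ⟨0, Finset.mem_range.2 hp⟩ (fun j => |F (a + j)|), ?_⟩
    intro n hn
    obtain ⟨k, rfl⟩ := Nat.exists_eq_add_of_le hn
    rw [hFmod k]
    exact Finset.le_sup' (fun j => |F (a + j)|) (Finset.mem_range.2 (Nat.mod_lt _ hp))
  have h0 : Tendsto (fun n : ℕ => F n / n) atTop (nhds 0) := by
    have habs : Tendsto (fun n : ℕ => |F n / n|) atTop (nhds 0) := by
      apply squeeze_zero' (Eventually.of_forall fun n => abs_nonneg _)
        (g := fun n : ℕ => B / n)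
      · filter_upwards [eventually_ge_atTop a, eventually_ge_atTop 1] with n hn hn1
        have hn0 : (0:ℝ) < n := by exact_mod_cast hn1
        rw [abs_div, abs_of_pos hn0]
        gcongr; exact hB n hn
      · exact tendsto_const_div_atTop_nhds_zero_nat B
    exact (tendsto_zero_iff_abs_tendsto_zero _).2 habs
  have hT : Tendsto (fun n : ℕ => L + F n / n) atTop (nhds (L + 0)) :=
    tendsto_const_nhds.add h0
  rw [add_zero] at hT
  apply Tendsto.congr' _ hT
  filter_upwards [eventually_ge_atTop 1] with n hn
  have hn0 : (n : ℝ) ≠ 0 := by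
    have : (0:ℝ) < n := by exact_mod_cast hn
    exact ne_of_gt this
  simp only [hF, sub_div, mul_comm (n:ℝ) L, mul_div_assoc, div_self hn0, mul_one]
  ring

/-- If `f`, `φ` and `φ₋` are continuous on a compact metric space and the ω-limit set
of `x` is finite, then the Birkhoff limit exists at `x`. -/
theorem birkhoff_limit_of_finite_omega {M : Type*} [MetricSpace M] [CompactSpace M]
    (f : M → M) (hf : Continuous f)
    (φ : M → ℝ) (hφ : Continuous φ)
    (hφm : Continuous (fun w => birkLower f φ w))
    (x : M) (hfin : (omegaMap f x).Finite) :
    ∃ L : ℝ, Tendsto (fun n : ℕ => birkSum f φ n x / n) atTop (nhds L) := by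
  classical
  set S := omegaMap f x with hS
  -- φ is bounded
  obtain ⟨C, hC0, hC⟩ : ∃ C : ℝ, 0 ≤ C ∧ ∀ z, |φ z| ≤ C := by
    obtain ⟨C, hC⟩ := isCompact_univ.exists_bound_of_continuousOn hφ.continuousOn
    exact ⟨max C 0, le_max_right _ _,
      fun z => le_trans (by simpa using hC z trivial) (le_max_left _ _)⟩
  set u : ℕ → ℝ := fun n => birkSum f φ n x / n with hu
  -- u is bounded
  have hub : ∀ n, |u n| ≤ C := by
    intro n
    rcases Nat.eq_zero_or_pos n with rfl | hn
    · simpa [hu, birkSum] using hC0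
    · have hn0 : (0:ℝ) < n := by exact_mod_cast hn
      have h1 : |birkSum f φ n x| ≤ n * C := by
        calc |∑ j ∈ Finset.range n, φ (f^[j] x)|
            ≤ ∑ j ∈ Finset.range n, |φ (f^[j] x)| := Finset.abs_sum_le_sum_abs _ _
          _ ≤ ∑ _j ∈ Finset.range n, C := Finset.sum_le_sum fun j _ => hC _
          _ = n * C := by simp [mul_comm]
      rw [hu]
      rw [abs_div, abs_of_pos hn0, div_le_iff₀ hn0]
      linarith [h1]
  have hbddle : IsBoundedUnder (· ≤ ·) atTop u :=
    isBoundedUnder_of ⟨C, fun n => (abs_le.1 (hub n)).2⟩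
  have hbddge : IsBoundedUnder (· ≥ ·) atTop u :=
    isBoundedUnder_of ⟨-C, fun n => (abs_le.1 (hub n)).1⟩
  -- S is invariant
  have hmaps : Set.MapsTo f S S := by
    rintro y ⟨s, hs, hy⟩
    refine ⟨fun k => s k + 1, fun a b hab => by simpa using hs hab, ?_⟩
    have h1 : Tendsto (fun k => f (f^[s k] x)) atTop (nhds (f y)) :=
      ((hf.tendsto y).comp hy)
    refine h1.congr fun k => ?_
    rw [Function.iterate_succ_apply']
  -- orbit approaches S
  have happroach : ∀ δ : ℝ, 0 < δ → ∀ᶠ n in atTop, ∃ y ∈ S, dist (f^[n] x) y < δ := by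
    intro δ hδ
    by_contra h
    rw [not_eventually] at h
    obtain ⟨s, hs, hsp⟩ := extraction_of_frequently_atTop h
    obtain ⟨z, -, t, ht, hz⟩ :=
      isCompact_univ.tendsto_subseq (x := fun k => f^[s k] x) (fun _ => Set.mem_univ _)
    have hzS : z ∈ S := ⟨s ∘ t, hs.comp ht, hz⟩
    have hd : Tendsto (fun k => dist (f^[s (t k)] x) z) atTop (nhds 0) := by
      simpa [dist_self] using hz.dist (tendsto_const_nhds (x := z))
    have h2 : ∀ k, δ ≤ dist (f^[s (t k)] x) z := fun k => by
      have h3 := hsp (t k)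
      push_neg at h3
      exact h3 z hzS
    have := ge_of_tendsto' hd h2
    linarith
  -- gap between distinct points of S
  obtain ⟨γ, hγ0, hγ⟩ : ∃ γ : ℝ, 0 < γ ∧ ∀ y ∈ S, ∀ z ∈ S, y ≠ z → γ ≤ dist y z := by
    set Fs := hfin.toFinset with hFs
    set D := ((Fs ×ˢ Fs).filter (fun q => q.1 ≠ q.2)).image (fun q => dist q.1 q.2) with hD
    by_cases hDne : D.Nonempty
    · refine ⟨D.min' hDne, ?_, ?_⟩
      · obtain ⟨q, hq, hqd⟩ := Finset.mem_image.1 (D.min'_mem hDne)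
        rw [← hqd]
        exact dist_pos.2 (Finset.mem_filter.1 hq).2
      · intro y hy z hz hne
        apply D.min'_le
        exact Finset.mem_image.2 ⟨(y, z), Finset.mem_filter.2
          ⟨Finset.mem_product.2 ⟨hfin.mem_toFinset.2 hy, hfin.mem_toFinset.2 hz⟩, hne⟩, rfl⟩
    · refine ⟨1, one_pos, fun y hy z hz hne => absurd ?_ hDne⟩
      exact ⟨dist y z, Finset.mem_image.2 ⟨(y, z), Finset.mem_filter.2
        ⟨Finset.mem_product.2 ⟨hfin.mem_toFinset.2 hy, hfin.mem_toFinset.2 hz⟩, hne⟩, rfl⟩⟩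
  -- the key estimate
  have key : ∀ ε : ℝ, 0 < ε → limsup u atTop ≤ liminf u atTop + 2 * ε := by
    intro ε hε
    -- modulus of continuity of φ
    obtain ⟨δ₁, hδ₁0, hδ₁⟩ :=
      Metric.uniformContinuous_iff.1 (CompactSpace.uniformContinuous_of_continuous hφ) ε hε
    set ε₂ : ℝ := min δ₁ (γ/3) with hε₂
    have hε₂0 : 0 < ε₂ := lt_min hδ₁0 (by linarith)
    obtain ⟨δ', hδ'0, hδ'⟩ :=
      Metric.uniformContinuous_iff.1 (CompactSpace.uniformContinuous_of_continuous hf) ε₂ hε₂0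
    set δ : ℝ := min δ' ε₂ with hδdef
    have hδ0 : 0 < δ := lt_min hδ'0 hε₂0
    obtain ⟨N, hN⟩ := Filter.eventually_atTop.1 (happroach δ hδ0)
    have hch : ∀ k : ℕ, ∃ y, y ∈ S ∧ dist (f^[N + k] x) y < δ := by
      intro k
      obtain ⟨y, hy, hyd⟩ := hN (N + k) (Nat.le_add_right _ _)
      exact ⟨y, hy, hyd⟩
    choose c hcS hcd using hch
    -- the shadow sequence follows f
    have hstep : ∀ k, c (k + 1) = f (c k) := by
      intro k
      have h1 : dist (f^[N + (k+1)] x) (f (c k)) < ε₂ := by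
        have e : f^[N + (k+1)] x = f (f^[N + k] x) := by
          rw [show N + (k+1) = (N+k)+1 by omega, Function.iterate_succ_apply']
        rw [e]
        exact hδ' (lt_of_lt_of_le (hcd k) (min_le_left _ _))
      have h2 : dist (c (k+1)) (f (c k)) < γ := by
        have h3 := dist_triangle (c (k+1)) (f^[N + (k+1)] x) (f (c k))
        have h4 : dist (c (k+1)) (f^[N + (k+1)] x) < δ := by
          rw [dist_comm]; exact hcd (k+1)
        have h5 : δ ≤ ε₂ := min_le_right _ _
        have h6 : ε₂ ≤ γ/3 := min_le_right _ _
        linarith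
      by_contra hne
      exact absurd (hγ _ (hcS (k+1)) _ (hmaps (hcS k)) hne) (not_le.2 h2)
    set w : M := c 0 with hw
    have hck : ∀ k, c k = f^[k] w := by
      intro k
      induction k with
      | zero => rfl
      | succ k ih =>
        rw [hstep k, ih]
        exact (Function.iterate_succ_apply' f k w).symm
    have hwS : ∀ k, f^[k] w ∈ S := fun k => hck k ▸ hcS k
    -- pigeonhole: orbit of w in finite S is eventually periodic
    obtain ⟨a, -, b, -, hab, heq⟩ :=
      Set.infinite_univ.exists_ne_map_eq_of_mapsTo
        (f := fun k : ℕ => f^[k] w) (fun k _ => hwS k) hfin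
    set a0 := min a b with ha0
    set b0 := max a b with hb0
    set p := b0 - a0 with hpdef
    have hp : 0 < p := by
      rcases hab.lt_or_gt with h | h <;> simp [hpdef, hb0, ha0] <;> omega
    have heq0 : f^[a0] w = f^[b0] w := by
      rcases hab.lt_or_gt with h | h
      · rw [ha0, hb0, min_eq_left h.le, max_eq_right h.le]; exact heq
      · rw [ha0, hb0, min_eq_right h.le, max_eq_left h.le]; exact heq.symm
    have hperw : ∀ k, a0 ≤ k → f^[k + p] w = f^[k] w := by
      intro k hk
      obtain ⟨m, rfl⟩ := Nat.exists_eq_add_of_le hk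
      rw [show a0 + m + p = m + (a0 + p) by omega, Function.iterate_add_apply,
        show a0 + p = b0 by omega, ← heq0, ← Function.iterate_add_apply,
        show m + a0 = a0 + m by omega]
    -- symbolic sequence
    set G : ℕ → ℝ := fun j => φ (f^[j - N] w) with hG
    have hGper : ∀ j, N + a0 ≤ j → G (j + p) = G j := by
      intro j hj
      have e : j + p - N = (j - N) + p := by omega
      simp only [hG, e]
      exact congrArg φ (hperw (j - N) (by omega))
    obtain ⟨L, hLT⟩ := cesaro_of_eventually_periodic G (N + a0) p hp hGper
    set v : ℕ → ℝ := fun n => (∑ j ∈ Finset.range n, G j) / n with hv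
    -- tracking: for j ≥ N, φ(f^[j] x) is ε-close to G j
    have htrack : ∀ j, N ≤ j → |φ (f^[j] x) - G j| < ε := by
      intro j hj
      obtain ⟨k, rfl⟩ := Nat.exists_eq_add_of_le hj
      have h1 : dist (f^[N + k] x) (f^[k] w) < δ := hck k ▸ hcd k
      have h2 : dist (f^[N + k] x) (f^[k] w) < δ₁ :=
        lt_of_lt_of_le h1 (le_trans (min_le_right _ _) (min_le_left _ _))
      have h3 := hδ₁ h2
      rw [Real.dist_eq] at h3
      simpa [hG, Nat.add_sub_cancel_left] using h3
    set K : ℝ := ∑ j ∈ Finset.range N, |φ (f^[j] x) - G j| with hK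
    have hK0 : 0 ≤ K := Finset.sum_nonneg fun j _ => abs_nonneg _
    -- comparison of partial sums
    have hcmp : ∀ n, N ≤ n → |birkSum f φ n x - ∑ j ∈ Finset.range n, G j| ≤ K + n * ε := by
      intro n hn
      obtain ⟨m, rfl⟩ := Nat.exists_eq_add_of_le hn
      have e1 : birkSum f φ (N + m) x - ∑ j ∈ Finset.range (N + m), G j
          = ∑ j ∈ Finset.range (N + m), (φ (f^[j] x) - G j) := by
        rw [birkSum, Finset.sum_sub_distrib]
      rw [e1, Finset.sum_range_add]
      calc |∑ j ∈ Finset.range N, (φ (f^[j] x) - G j)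
            + ∑ j ∈ Finset.range m, (φ (f^[N + j] x) - G (N + j))|
          ≤ |∑ j ∈ Finset.range N, (φ (f^[j] x) - G j)|
            + |∑ j ∈ Finset.range m, (φ (f^[N + j] x) - G (N + j))| := abs_add_le _ _
        _ ≤ K + m * ε := by
            gcongr
            · exact Finset.abs_sum_le_sum_abs _ _
            · calc |∑ j ∈ Finset.range m, (φ (f^[N + j] x) - G (N + j))|
                  ≤ ∑ j ∈ Finset.range m, |φ (f^[N + j] x) - G (N + j)| :=
                    Finset.abs_sum_le_sum_abs _ _
                _ ≤ ∑ _j ∈ Finset.range m, ε :=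
                    Finset.sum_le_sum fun j _ => (htrack _ (Nat.le_add_right _ _)).le
                _ = m * ε := by simp [mul_comm]
        _ ≤ K + ((N + m : ℕ) : ℝ) * ε := by
            have h7 : (0:ℝ) ≤ (N:ℝ) * ε := by positivity
            push_cast
            linarith
    -- hence |u n - v n| ≤ K / n + ε eventually
    have hdiff : ∀ᶠ n in atTop, |u n - v n| ≤ K / n + ε := by
      filter_upwards [eventually_ge_atTop N, eventually_ge_atTop 1] with n hn hn1
      have hn0 : (0:ℝ) < n := by exact_mod_cast hn1
      have e1 : u n - v n = (birkSum f φ n x - ∑ j ∈ Finset.range n, G j) / n := by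
        rw [hu, hv, div_sub_div_same]
      rw [e1, abs_div, abs_of_pos hn0, div_le_iff₀ hn0]
      have := hcmp n hn
      have e2 : (K / n + ε) * n = K + n * ε := by field_simp
      rw [e2]
      exact this
    -- auxiliary limits
    have hKn : Tendsto (fun n : ℕ => K / n) atTop (nhds 0) :=
      tendsto_const_div_atTop_nhds_zero_nat K
    have hvplus : Tendsto (fun n : ℕ => v n + (K / n + ε)) atTop (nhds (L + ε)) := by
      have := (hLT.add (hKn.add (tendsto_const_nhds (x := ε))))
      simpa using this
    have hvminus : Tendsto (fun n : ℕ => v n - (K / n + ε)) atTop (nhds (L - ε)) := by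
      have := (hLT.sub (hKn.add (tendsto_const_nhds (x := ε))))
      simpa using this
    -- limsup and liminf bounds
    have hupper : limsup u atTop ≤ L + ε := by
      have h1 : ∀ᶠ n in atTop, u n ≤ v n + (K / n + ε) := by
        filter_upwards [hdiff] with n hn
        have := (abs_le.1 hn).2
        linarith
      calc limsup u atTop ≤ limsup (fun n : ℕ => v n + (K / n + ε)) atTop :=
            limsup_le_limsup h1 (hbddge.isCoboundedUnder_le) (hvplus.isBoundedUnder_le)
        _ = L + ε := hvplus.limsup_eq
    have hlower : L - ε ≤ liminf u atTop := by
      have h1 : ∀ᶠ n in atTop, v n - (K / n + ε) ≤ u n := by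
        filter_upwards [hdiff] with n hn
        have := (abs_le.1 hn).1
        linarith
      calc L - ε = liminf (fun n : ℕ => v n - (K / n + ε)) atTop := hvminus.liminf_eq.symm
        _ ≤ liminf u atTop :=
            liminf_le_liminf h1 (hvminus.isBoundedUnder_ge) (hbddle.isCoboundedUnder_ge)
    linarith
  -- conclude
  have heq : liminf u atTop = limsup u atTop := by
    have h1 : limsup u atTop ≤ liminf u atTop := by
      apply le_of_forall_pos_le_add
      intro ε hε
      have := key (ε/2) (by linarith)
      linarith
    exact le_antisymm (liminf_le_limsup hbddle hbddge) h1
  exact ⟨limsup u atTop, tendsto_of_liminf_eq_limsup heq rfl hbddle hbddge⟩
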